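/- Let A be a positively graded finite-dimensional algebra over an algebraically closed field K with soc(P^μ) ≅ L^μ⟨d_μ⟩ (degree-zero isomorphism) for each μ ∈ Λ₀. If the endomorphism algebra B of the basic projective-injective module admits an admissible basis Υ, then the canonical form tr attached to Υ is a symmetrizing form on B; in particular, B is a symmetric algebra over K. -/

import Mathlib

/-- The socle of a module: the largest semisimple submodule. -/
def Socle (A M : Type) [Ring A] [AddCommGroup M] [Module A M] : Submodule A M :=
  ⨆ (p : Submodule A M) (_ : IsSimpleModule A ↥p), p

/-- The radical of a module: the intersection of all maximal submodules. -/
def Rad (A M : Type) [Ring A] [AddCommGroup M] [Module A M] : Submodule A M :=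
  sInf {p : Submodule A M | IsCoatom p}

/-- `f` is a homogeneous map of degree `j` with respect to the gradings `gM`, `gN`. -/
def IsHomogMap {K M N : Type} [Field K] [AddCommGroup M] [Module K M]
    [AddCommGroup N] [Module K N]
    (gM : ℤ → Submodule K M) (gN : ℤ → Submodule K N) (j : ℤ) (f : M → N) : Prop :=
  ∀ i : ℤ, ∀ m ∈ gM i, f m ∈ gN (i + j)

/-- The canonical embedding of `Hom_A(P^λ, P^μ)` into `End_A(⊕ P^λ)`. -/
noncomputable def emb (A : Type) [Ring A] (ι : Type) [DecidableEq ι]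
    (P : ι → Type) [∀ i, AddCommGroup (P i)] [∀ i, Module A (P i)]
    (l m : ι) (f : P l →ₗ[A] P m) : Module.End A (DirectSum ι P) :=
  (DirectSum.lof A ι P m).comp (f.comp (DirectSum.component A ι P l))


section EmbLemmas
variable {A : Type} [Ring A] {ι : Type} [DecidableEq ι] {P : ι → Type}
  [∀ i, AddCommGroup (P i)] [∀ i, Module A (P i)]

theorem emb_apply' (l m : ι) (f : P l →ₗ[A] P m) (v : DirectSum ι P) :
    emb A ι P l m f v = DirectSum.lof A ι P m (f (DirectSum.component A ι P l v)) := rfl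

theorem emb_lof_self (l m : ι) (f : P l →ₗ[A] P m) (q : P l) :
    emb A ι P l m f (DirectSum.lof A ι P l q) = DirectSum.lof A ι P m (f q) := by
  rw [emb_apply', DirectSum.component.lof_self]

theorem emb_lof_ne (l m : ι) (f : P l →ₗ[A] P m) {l' : ι} (h : l' ≠ l) (q : P l') :
    emb A ι P l m f (DirectSum.lof A ι P l' q) = 0 := by
  rw [emb_apply', DirectSum.component.of, dif_neg h, map_zero, map_zero]

theorem component_lof_ne {m m' : ι} (h : m ≠ m') (v : P m) :
    DirectSum.component A ι P m' (DirectSum.lof A ι P m v) = 0 := by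
  rw [DirectSum.component.of, dif_neg h]

theorem emb_zero (l m : ι) : emb A ι P l m 0 = 0 := by
  refine LinearMap.ext fun v => ?_
  rw [emb_apply', LinearMap.zero_apply, map_zero, LinearMap.zero_apply]

theorem emb_mul_ne (l m m' n : ι) (f : P m' →ₗ[A] P n) (g : P l →ₗ[A] P m)
    (h : m ≠ m') : emb A ι P m' n f * emb A ι P l m g = 0 := by
  refine LinearMap.ext fun v => ?_
  rw [Module.End.mul_apply, emb_apply' l m, emb_lof_ne _ _ _ h, LinearMap.zero_apply]

end EmbLemmas

set_option maxHeartbeats 1000000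

/-- Let `A` be a positively graded finite-dimensional algebra over an
algebraically closed field with `soc(P^μ) ≅ L^μ⟨d_μ⟩` for each `μ ∈ Λ₀`.  If the
endomorphism algebra `B` of the basic projective-injective module admits an admissible
basis `Υ`, then the canonical form `tr` attached to `Υ` is a symmetrizing form on `B`;
in particular `B` is a symmetric algebra. -/
theorem stmt_7
    (K A : Type) [Field K] [IsAlgClosed K] [Ring A] [Algebra K A] [FiniteDimensional K A]
    -- positive grading on A
    (gA : ℤ → Submodule K A)
    (hA : DirectSum.IsInternal gA)
    (hA1 : (1 : A) ∈ gA 0)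
    (hAmul : ∀ i j : ℤ, ∀ a ∈ gA i, ∀ b ∈ gA j, a * b ∈ gA (i + j))
    (hApos : ∀ i : ℤ, i < 0 → gA i = ⊥)
    (Lam : Type) [DecidableEq Lam] (L P : Lam → Type)
    [∀ l, AddCommGroup (L l)] [∀ l, Module A (L l)] [∀ l, Module K (L l)]
    [∀ l, IsScalarTower K A (L l)] [∀ l, FiniteDimensional K (L l)]
    [∀ l, AddCommGroup (P l)] [∀ l, Module A (P l)] [∀ l, Module K (P l)]
    [∀ l, IsScalarTower K A (P l)] [∀ l, SMulCommClass A K (P l)]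
    [∀ l, FiniteDimensional K (P l)]
    (hsimple : ∀ l, IsSimpleModule A (L l))
    (hdistinct : ∀ l m, Nonempty (L l ≃ₗ[A] L m) → l = m)
    (hproj : ∀ l, Module.Projective A (P l))
    (hcover : ∀ l, ∃ π : P l →ₗ[A] L l, Function.Surjective π ∧ LinearMap.ker π = Rad A (P l))
    -- gradings on the projective covers, supported in degrees 0..d l
    (d : Lam → ℤ) (hd : ∀ l, 0 ≤ d l)
    (Pgr : ∀ l, ℤ → Submodule K (P l))
    (hP : ∀ l, DirectSum.IsInternal (Pgr l))
    (hPsmul : ∀ l, ∀ i j : ℤ, ∀ a ∈ gA i, ∀ x ∈ Pgr l j, a • x ∈ Pgr l (i + j))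
    (hPsupp : ∀ l, ∀ i : ℤ, (i < 0 ∨ d l < i) → Pgr l i = ⊥)
    (hPtop : ∀ l, Pgr l (d l) ≠ ⊥)
    -- soc(P^μ) ≅ L^μ⟨d_μ⟩ for each μ ∈ Λ₀
    (hsoc : ∀ l, Module.Injective A (P l) → Nonempty (↥(Socle A (P l)) ≃ₗ[A] L l))
    (hsocdeg : ∀ l, Module.Injective A (P l) →
      (Socle A (P l) : Set (P l)) ⊆ (Pgr l (d l) : Set (P l)))
    -- the fixed maps θ_λ : P^λ → P^λ with image soc(P^λ), homogeneous of degree d_λ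
    (θ : ∀ s : {l : Lam // Module.Injective A (P l)}, P s.1 →ₗ[A] P s.1)
    (hθ : ∀ s, LinearMap.range (θ s) = Socle A (P s.1))
    (hθhom : ∀ s, IsHomogMap (Pgr s.1) (Pgr s.1) (d s.1) (θ s))
    -- an admissible basis of B = End_A(⊕_{λ∈Λ₀} P^λ): homogeneous elements lying in
    -- single Hom-blocks, containing the θ's, satisfying the admissible condition
    (ι : Type) [Fintype ι]
    (b : Module.Basis ι K (Module.End A
      (DirectSum {l : Lam // Module.Injective A (P l)} (fun s => P s.1))))
    (src tgt : ι → {l : Lam // Module.Injective A (P l)}) (deg : ι → ℤ)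
    (bmap : ∀ i : ι, P (src i).1 →ₗ[A] P (tgt i).1)
    (hbmap : ∀ i : ι, b i =
      emb A {l : Lam // Module.Injective A (P l)} (fun s => P s.1) (src i) (tgt i) (bmap i))
    (hbhom : ∀ i : ι, IsHomogMap (Pgr (src i).1) (Pgr (tgt i).1) (deg i) (bmap i))
    (hθin : ∀ s, ∃ i : ι,
      b i = emb A {l : Lam // Module.Injective A (P l)} (fun s => P s.1) s s (θ s))
    -- admissible condition (i)
    (hadm1 : ∀ i : ι, d (tgt i).1 = d (src i).1)
    -- admissible condition (ii)
    (hadm2 : ∀ i : ι,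
      Set.ncard {i' : ι | src i' = tgt i ∧ tgt i' = src i ∧ deg i' = d (src i).1 - deg i} =
      Set.ncard {i' : ι | src i' = src i ∧ tgt i' = tgt i ∧ deg i' = deg i})
    -- admissible condition (iii)
    (hadm3 : ∀ i : ι, ∃ i' : ι,
      (src i' = tgt i ∧ tgt i' = src i ∧ deg i' = d (src i).1 - deg i) ∧
      (∃ c : K, c ≠ 0 ∧
        b i' * b i = c • emb A {l : Lam // Module.Injective A (P l)} (fun s => P s.1)
          (src i) (src i) (θ (src i)) ∧
        b i * b i' = c • emb A {l : Lam // Module.Injective A (P l)} (fun s => P s.1)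
          (tgt i) (tgt i) (θ (tgt i))) ∧
      (∀ i'' : ι, i'' ≠ i' →
        (src i'' = tgt i ∧ tgt i'' = src i ∧ deg i'' = d (src i).1 - deg i) →
        b i'' * b i = 0 ∧ b i * b i'' = 0))
    -- the canonical form tr attached to the admissible basis
    (tr : Module.End A (DirectSum {l : Lam // Module.Injective A (P l)} (fun s => P s.1)) →ₗ[K] K)
    (htr1 : ∀ i : ι, (∃ s, b i =
        emb A {l : Lam // Module.Injective A (P l)} (fun s => P s.1) s s (θ s)) →
      tr (b i) = 1)
    (htr0 : ∀ i : ι, (¬ ∃ s, b i =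
        emb A {l : Lam // Module.Injective A (P l)} (fun s => P s.1) s s (θ s)) →
      tr (b i) = 0) :
    (∀ x y, tr (x * y) = tr (y * x)) ∧
    (∀ x, x ≠ 0 → ∃ y, tr (x * y) ≠ 0) := by
  classical
  -- trivial unused hypotheses
  clear hA hA1 hAmul hApos hdistinct hproj hcover hd hPtop hsocdeg hadm2
  -- R-independence of lof/component
  have lofAK : ∀ (s : {l : Lam // Module.Injective A (P l)}) (v : P s.1),
      DirectSum.lof A _ (fun s => P s.1) s v = DirectSum.lof K _ (fun s => P s.1) s v :=
    fun _ _ => rfl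
  have compAK : ∀ (s : {l : Lam // Module.Injective A (P l)})
      (v : DirectSum _ (fun s : {l : Lam // Module.Injective A (P l)} => P s.1)),
      DirectSum.component A _ (fun s => P s.1) s v =
      DirectSum.component K _ (fun s => P s.1) s v := fun _ _ => rfl
  -- projections onto graded pieces
  obtain ⟨prj, hprj1, hprj2⟩ : ∃ prj : (l : Lam) → ℤ → (P l →ₗ[K] P l),
      (∀ (l : Lam) (e : ℤ) (q : P l), q ∈ Pgr l e → prj l e q = q) ∧
      (∀ (l : Lam) (e e' : ℤ) (q : P l), q ∈ Pgr l e' → e' ≠ e → prj l e q = 0) := by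
    refine ⟨fun l e => (Pgr l e).subtype ∘ₗ
      (DirectSum.component K ℤ (fun k => ↥(Pgr l k)) e) ∘ₗ
      (LinearEquiv.ofBijective (DirectSum.coeLinearMap (Pgr l)) (hP l)).symm.toLinearMap,
      ?_, ?_⟩
    · intro l e q hq
      have h1 := (hP l).ofBijective_coeLinearMap_of_mem hq
      simp only [LinearMap.comp_apply, LinearEquiv.coe_coe]
      rw [show DirectSum.component K ℤ (fun k => ↥(Pgr l k)) e
          ((LinearEquiv.ofBijective (DirectSum.coeLinearMap (Pgr l)) (hP l)).symm q) =
          (LinearEquiv.ofBijective (DirectSum.coeLinearMap (Pgr l)) (hP l)).symm q e from rfl,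
        h1]
      rfl
    · intro l e e' q hq hne
      have h1 := (hP l).ofBijective_coeLinearMap_of_mem_ne hne hq
      simp only [LinearMap.comp_apply, LinearEquiv.coe_coe]
      rw [show DirectSum.component K ℤ (fun k => ↥(Pgr l k)) e
          ((LinearEquiv.ofBijective (DirectSum.coeLinearMap (Pgr l)) (hP l)).symm q) =
          (LinearEquiv.ofBijective (DirectSum.coeLinearMap (Pgr l)) (hP l)).symm q e from rfl,
        h1]
      rfl
  -- span of graded pieces
  have spanP : ∀ (l : Lam) (N : Submodule K (P l)), (∀ k, Pgr l k ≤ N) → ∀ q : P l, q ∈ N := by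
    intro l N h q
    have h1 : (⊤ : Submodule K (P l)) ≤ N := by
      rw [← (hP l).submodule_iSup_eq_top]; exact iSup_le h
    exact h1 Submodule.mem_top
  -- θ is nonzero
  have hθp : ∀ s : {l : Lam // Module.Injective A (P l)}, ∃ p : P s.1, θ s p ≠ 0 := by
    intro s
    by_contra h
    push_neg at h
    have hz : θ s = 0 := LinearMap.ext fun p => h p
    have hbot : Socle A (P s.1) = ⊥ := by
      rw [← hθ s, hz, LinearMap.range_zero]
    obtain ⟨e⟩ := hsoc s.1 s.2
    rw [hbot] at e
    haveI : IsSimpleModule A (L s.1) := hsimple s.1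
    haveI : Nontrivial (L s.1) := IsSimpleModule.nontrivial A (L s.1)
    haveI : Nontrivial ↥(⊥ : Submodule A (P s.1)) := e.toEquiv.nontrivial
    obtain ⟨u, v, huv⟩ := this
    exact huv (Subsingleton.elim u v)
  -- key facts about basis elements
  have key0 : ∀ (i : ι) (l' : {l : Lam // Module.Injective A (P l)}) (q : P l'.1),
      src i ≠ l' → b i (DirectSum.lof A _ (fun s => P s.1) l' q) = 0 := by
    intro i l' q h
    rw [hbmap i, emb_lof_ne _ _ _ (fun hh => h hh.symm)]
  have key2 : ∀ (i : ι) (l' m' : {l : Lam // Module.Injective A (P l)}) (q : P l'.1),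
      tgt i ≠ m' → DirectSum.component A _ (fun s => P s.1) m'
        (b i (DirectSum.lof A _ (fun s => P s.1) l' q)) = 0 := by
    intro i l' m' q h
    rw [hbmap i, emb_apply', component_lof_ne h]
  have key3 : ∀ (i : ι) (l' : {l : Lam // Module.Injective A (P l)}), src i = l' →
      ∀ (k : ℤ) (q : P l'.1), q ∈ Pgr l'.1 k →
      DirectSum.component A _ (fun s => P s.1) (tgt i)
        (b i (DirectSum.lof A _ (fun s => P s.1) l' q)) ∈ Pgr (tgt i).1 (k + deg i) := by
    intro i l' h
    subst h
    intro k q hq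
    rw [hbmap i, emb_lof_self, DirectSum.component.lof_self]
    exact hbhom i k q hq
  have key4 : ∀ (i : ι) (l' : {l : Lam // Module.Injective A (P l)}), src i = l' →
      ∀ q : P l'.1, b i (DirectSum.lof A _ (fun s => P s.1) l' q) =
        DirectSum.lof A _ (fun s => P s.1) (tgt i)
          (DirectSum.component A _ (fun s => P s.1) (tgt i)
            (b i (DirectSum.lof A _ (fun s => P s.1) l' q))) := by
    intro i l' h
    subst h
    intro q
    rw [hbmap i, emb_lof_self, DirectSum.component.lof_self]
  -- scaled θ-embeddings are nonzero
  have hembne : ∀ (s : {l : Lam // Module.Injective A (P l)}) (cc : K), cc ≠ 0 →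
      cc • emb A _ (fun s => P s.1) s s (θ s) ≠ 0 := by
    intro s cc hcc h0
    obtain ⟨p, hp⟩ := hθp s
    have h1 : (cc • emb A _ (fun s => P s.1) s s (θ s))
        (DirectSum.lof A _ (fun s => P s.1) s p) =
        cc • DirectSum.lof K _ (fun s => P s.1) s (θ s p) := by
      rw [LinearMap.smul_apply, emb_lof_self, lofAK]
    rw [h0, LinearMap.zero_apply] at h1
    have h2 : cc • θ s p = 0 := by
      have := congrArg (DirectSum.component K _ (fun s => P s.1) s) h1
      simpa using this.symm
    rcases smul_eq_zero.mp h2 with h | h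
    · exact hcc h
    · exact hp h
  -- LEMMA A : coefficients of a homogeneous single-block element are concentrated
  have lemA : ∀ (x : Module.End A (DirectSum {l : Lam // Module.Injective A (P l)}
        (fun s => P s.1)))
      (l m : {l : Lam // Module.Injective A (P l)}) (j : ℤ) (g : P l.1 →ₗ[A] P m.1),
      x = emb A _ (fun s => P s.1) l m g → IsHomogMap (Pgr l.1) (Pgr m.1) j g →
      ∀ i₀ : ι, ¬(src i₀ = l ∧ tgt i₀ = m ∧ deg i₀ = j) → b.repr x i₀ = 0 := by
    intro x l m j g hx hg i₀ hni
    have main : ∀ (k : ℤ) (q : P (src i₀).1), q ∈ Pgr (src i₀).1 k →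
        ∑ i : ι, (if src i = src i₀ ∧ tgt i = tgt i₀ ∧ deg i = deg i₀
            then b.repr x i else 0) •
          DirectSum.component K _ (fun s => P s.1) (tgt i₀)
            (b i (DirectSum.lof A _ (fun s => P s.1) (src i₀) q)) = 0 := by
      intro k q hq
      have hX : DirectSum.component K _ (fun s => P s.1) (tgt i₀)
          (x (DirectSum.lof A _ (fun s => P s.1) (src i₀) q)) =
          ∑ i : ι, b.repr x i • DirectSum.component K _ (fun s => P s.1) (tgt i₀)
            (b i (DirectSum.lof A _ (fun s => P s.1) (src i₀) q)) := by
        conv_lhs => rw [← b.sum_repr x]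
        rw [LinearMap.sum_apply, map_sum]
        refine Finset.sum_congr rfl fun i _ => ?_
        rw [LinearMap.smul_apply, map_smul]
      have hL : prj (tgt i₀).1 (k + deg i₀)
          (DirectSum.component K _ (fun s => P s.1) (tgt i₀)
            (x (DirectSum.lof A _ (fun s => P s.1) (src i₀) q))) = 0 := by
        subst hx
        by_cases hl : src i₀ = l
        · subst hl
          by_cases hm : tgt i₀ = m
          · subst hm
            rw [emb_lof_self, ← compAK, DirectSum.component.lof_self]
            have hdj : deg i₀ ≠ j := fun hdj => hni ⟨rfl, rfl, hdj⟩
            exact hprj2 _ _ _ _ (hg k q hq) (by omega)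
          · rw [emb_lof_self, ← compAK, component_lof_ne (fun hh => hm hh.symm),
              map_zero]
        · rw [emb_lof_ne _ _ _ hl, map_zero, map_zero]
      have hXP := congrArg (prj (tgt i₀).1 (k + deg i₀)) hX
      rw [map_sum, hL] at hXP
      have hterm : ∀ i : ι, (if src i = src i₀ ∧ tgt i = tgt i₀ ∧ deg i = deg i₀
            then b.repr x i else 0) • DirectSum.component K _ (fun s => P s.1) (tgt i₀)
            (b i (DirectSum.lof A _ (fun s => P s.1) (src i₀) q)) =
          prj (tgt i₀).1 (k + deg i₀) (b.repr x i •
            DirectSum.component K _ (fun s => P s.1) (tgt i₀)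
              (b i (DirectSum.lof A _ (fun s => P s.1) (src i₀) q))) := by
        intro i
        by_cases h1 : src i = src i₀
        · by_cases h2 : tgt i = tgt i₀
          · by_cases h3 : deg i = deg i₀
            · rw [if_pos ⟨h1, h2, h3⟩, map_smul]
              congr 1
              have hmem := key3 i (src i₀) h1 k q hq
              rw [compAK, h2, h3] at hmem
              exact (hprj1 _ _ _ hmem).symm
            · rw [if_neg (by tauto), map_smul]
              have hmem := key3 i (src i₀) h1 k q hq
              rw [compAK, h2] at hmem
              rw [hprj2 _ _ _ _ hmem (by omega), smul_zero, zero_smul]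
          · rw [if_neg (by tauto), ← compAK, key2 i _ _ q h2, smul_zero, smul_zero,
              map_zero]
        · rw [if_neg (by tauto), key0 i _ q h1, map_zero, smul_zero, smul_zero, map_zero]
      rw [Finset.sum_congr rfl fun i _ => hterm i]
      exact hXP.symm
    have hy : ∑ i : ι, (if src i = src i₀ ∧ tgt i = tgt i₀ ∧ deg i = deg i₀
        then b.repr x i else 0) • b i = 0 := by
      refine DirectSum.linearMap_ext A fun l' => ?_
      refine LinearMap.ext fun q => ?_
      simp only [LinearMap.comp_apply, LinearMap.sum_apply, LinearMap.smul_apply,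
        LinearMap.zero_apply, LinearMap.zero_comp]
      by_cases hl : l' = src i₀
      · subst hl
        have hsub : ∀ (k : ℤ) (q' : P (src i₀).1), q' ∈ Pgr (src i₀).1 k →
            ∑ i : ι, (if src i = src i₀ ∧ tgt i = tgt i₀ ∧ deg i = deg i₀
                then b.repr x i else 0) •
              b i (DirectSum.lof A _ (fun s => P s.1) (src i₀) q') = 0 := by
          intro k q' hq'
          have hterm2 : ∀ i : ι, (if src i = src i₀ ∧ tgt i = tgt i₀ ∧ deg i = deg i₀
                then b.repr x i else 0) •
                b i (DirectSum.lof A _ (fun s => P s.1) (src i₀) q') =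
              DirectSum.lof K _ (fun s => P s.1) (tgt i₀)
                ((if src i = src i₀ ∧ tgt i = tgt i₀ ∧ deg i = deg i₀
                    then b.repr x i else 0) •
                  DirectSum.component K _ (fun s => P s.1) (tgt i₀)
                    (b i (DirectSum.lof A _ (fun s => P s.1) (src i₀) q'))) := by
            intro i
            by_cases hT : src i = src i₀ ∧ tgt i = tgt i₀ ∧ deg i = deg i₀
            · rw [map_smul]
              have h4 := key4 i (src i₀) hT.1 q'
              rw [hT.2.1] at h4
              conv_lhs => rw [h4]
              rfl
            · rw [if_neg hT, zero_smul, zero_smul, map_zero]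
          rw [Finset.sum_congr rfl fun i _ => hterm2 i, ← map_sum, main k q' hq',
            map_zero]
        have hle : ∀ k, Pgr (src i₀).1 k ≤ LinearMap.ker
            (∑ i : ι, (if src i = src i₀ ∧ tgt i = tgt i₀ ∧ deg i = deg i₀
                then b.repr x i else 0) •
              (((b i).comp (DirectSum.lof A _ (fun s => P s.1) (src i₀))).restrictScalars K)) := by
          intro k q' hq'
          simp only [LinearMap.mem_ker, LinearMap.sum_apply, LinearMap.smul_apply,
            LinearMap.restrictScalars_apply, LinearMap.comp_apply]
          exact hsub k q' hq'
        have hqmem := spanP (src i₀).1 _ hle q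
        simp only [LinearMap.mem_ker, LinearMap.sum_apply, LinearMap.smul_apply,
          LinearMap.restrictScalars_apply, LinearMap.comp_apply] at hqmem
        exact hqmem
      · refine Finset.sum_eq_zero fun i _ => ?_
        by_cases hT : src i = src i₀ ∧ tgt i = tgt i₀ ∧ deg i = deg i₀
        · rw [key0 i l' q (fun hh => hl (by rw [← hh, hT.1])), smul_zero]
        · rw [if_neg hT, zero_smul]
    have hres := Fintype.linearIndependent_iff.mp b.linearIndependent
      (fun i => if src i = src i₀ ∧ tgt i = tgt i₀ ∧ deg i = deg i₀
        then b.repr x i else 0) hy i₀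
    simpa using hres
  -- trace of theta embeddings
  have trθ : ∀ s : {l : Lam // Module.Injective A (P l)},
      tr (emb A _ (fun s => P s.1) s s (θ s)) = 1 := by
    intro s
    obtain ⟨i1, hi1⟩ := hθin s
    rw [← hi1]
    exact htr1 i1 ⟨s, hi1⟩
  have trsmulθ : ∀ (s : {l : Lam // Module.Injective A (P l)}) (cc : K),
      tr (cc • emb A _ (fun s => P s.1) s s (θ s)) = cc := by
    intro s cc
    rw [map_smul, trθ s, smul_eq_mul, mul_one]
  -- theta indices have diagonal triple
  have hTheta : ∀ (i : ι) (s : {l : Lam // Module.Injective A (P l)}),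
      b i = emb A _ (fun s => P s.1) s s (θ s) →
      src i = s ∧ tgt i = s ∧ deg i = d s.1 := by
    intro i s hbi
    obtain ⟨p, hp⟩ := hθp s
    have h1 : b i (DirectSum.lof A _ (fun s => P s.1) s p) =
        DirectSum.lof A _ (fun s => P s.1) s (θ s p) := by
      rw [hbi, emb_lof_self]
    have hsrc : src i = s := by
      by_contra h
      rw [key0 i s p h] at h1
      have := congrArg (DirectSum.component A _ (fun s => P s.1) s) h1
      rw [map_zero, DirectSum.component.lof_self] at this
      exact hp this.symm
    have htgt : tgt i = s := by
      by_contra h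
      have := congrArg (DirectSum.component A _ (fun s => P s.1) s) h1
      rw [key2 i s s p h, DirectSum.component.lof_self] at this
      exact hp this.symm
    refine ⟨hsrc, htgt, ?_⟩
    subst hsrc
    by_contra hdeg
    have hval : ∀ q : P (src i).1, DirectSum.component A _ (fun s => P s.1) (src i)
        (b i (DirectSum.lof A _ (fun s => P s.1) (src i) q)) = θ (src i) q := by
      intro q
      rw [hbi, emb_lof_self, DirectSum.component.lof_self]
    have hpc : ∀ (k : ℤ) (q : P (src i).1), q ∈ Pgr (src i).1 k → θ (src i) q = 0 := by
      intro k q hq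
      have m1 := key3 i (src i) rfl k q hq
      rw [htgt, hval q] at m1
      have m2 := hθhom (src i) k q hq
      have e1 := hprj1 (src i).1 (k + d (src i).1) _ m2
      have e2 := hprj2 (src i).1 (k + d (src i).1) (k + deg i) _ m1 (by omega)
      rw [e2] at e1
      exact e1.symm
    have hker := spanP (src i).1 (LinearMap.ker ((θ (src i)).restrictScalars K))
      (fun k q' hq' => by
        simp only [LinearMap.mem_ker, LinearMap.restrictScalars_apply]
        exact hpc k q' hq') p
    rw [LinearMap.mem_ker, LinearMap.restrictScalars_apply] at hker
    exact hp hker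
  -- trace expansion
  have tr_expand : ∀ x, tr x = ∑ i : ι, b.repr x i * tr (b i) := by
    intro x
    conv_lhs => rw [← b.sum_repr x]
    rw [map_sum]
    refine Finset.sum_congr rfl fun i _ => ?_
    rw [map_smul, smul_eq_mul]
  -- trace vanishing for off-diagonal / wrong-degree homogeneous elements
  have tr0 : ∀ (x : Module.End A (DirectSum {l : Lam // Module.Injective A (P l)}
        (fun s => P s.1)))
      (l m : {l : Lam // Module.Injective A (P l)}) (j : ℤ) (g : P l.1 →ₗ[A] P m.1),
      x = emb A _ (fun s => P s.1) l m g → IsHomogMap (Pgr l.1) (Pgr m.1) j g →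
      ¬(l = m ∧ j = d l.1) → tr x = 0 := by
    intro x l m j g hx hg hc
    rw [tr_expand x]
    refine Finset.sum_eq_zero fun i _ => ?_
    by_cases hth : ∃ s, b i = emb A _ (fun s => P s.1) s s (θ s)
    · obtain ⟨s, hs⟩ := hth
      obtain ⟨h1, h2, h3⟩ := hTheta i s hs
      have hz : b.repr x i = 0 := by
        refine lemA x l m j g hx hg i ?_
        rintro ⟨e1, e2, e3⟩
        refine hc ⟨?_, ?_⟩
        · rw [← e1, ← e2, h1, h2]
        · have hls : l = s := by rw [← e1]; exact h1
          rw [hls, ← e3]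
          exact h3
      rw [hz, zero_mul]
    · rw [htr0 i hth, mul_zero]
  -- products of basis vectors
  have hmulzero : ∀ i j : ι, tgt j ≠ src i → b i * b j = 0 := by
    intro i j h
    rw [hbmap i, hbmap j]
    exact emb_mul_ne _ _ _ _ _ _ h
  have hmulhom : ∀ i j : ι, ∃ g : P (src j).1 →ₗ[A] P (tgt i).1,
      b i * b j = emb A _ (fun s => P s.1) (src j) (tgt i) g ∧
      IsHomogMap (Pgr (src j).1) (Pgr (tgt i).1) (deg i + deg j) g := by
    intro i j
    by_cases h : tgt j = src i
    · refine ⟨(DirectSum.component A _ (fun s => P s.1) (tgt i)).comp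
        ((b i * b j).comp (DirectSum.lof A _ (fun s => P s.1) (src j))), ?_, ?_⟩
      · refine DirectSum.linearMap_ext A fun l' => ?_
        refine LinearMap.ext fun q => ?_
        simp only [LinearMap.comp_apply]
        by_cases hl : l' = src j
        · subst hl
          rw [emb_lof_self]
          simp only [LinearMap.comp_apply, Module.End.mul_apply]
          conv_lhs => rw [key4 j (src j) rfl q, key4 i (tgt j) h.symm _]
          conv_rhs => rw [key4 j (src j) rfl q, key4 i (tgt j) h.symm _,
            DirectSum.component.lof_self]
        · rw [Module.End.mul_apply, key0 j l' q (fun hh => hl hh.symm), map_zero,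
            emb_lof_ne _ _ _ hl]
      · intro k q hq
        simp only [LinearMap.comp_apply, Module.End.mul_apply]
        rw [key4 j (src j) rfl q]
        have hv := key3 j (src j) rfl k q hq
        set v := DirectSum.component A _ (fun s => P s.1) (tgt j)
          (b j (DirectSum.lof A _ (fun s => P s.1) (src j) q)) with hvdef
        clear_value v
        have hres := key3 i (tgt j) h.symm (k + deg j) v hv
        rwa [show k + deg j + deg i = k + (deg i + deg j) by ring] at hres
    · refine ⟨0, ?_, ?_⟩
      · rw [hmulzero i j h, emb_zero]
      · intro k q hq
        rw [LinearMap.zero_apply]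
        exact (Pgr (tgt i).1 (k + (deg i + deg j))).zero_mem
  have trmul0 : ∀ i j : ι, ¬(src j = tgt i ∧ deg i + deg j = d (src j).1) →
      tr (b i * b j) = 0 := by
    intro i j h
    obtain ⟨g, hg1, hg2⟩ := hmulhom i j
    exact tr0 _ _ _ _ g hg1 hg2 h
  have trne : ∀ i j : ι, tr (b i * b j) ≠ 0 →
      tgt j = src i ∧ src j = tgt i ∧ deg i + deg j = d (src j).1 := by
    intro i j h
    by_cases h1 : tgt j = src i
    · by_cases h2 : src j = tgt i ∧ deg i + deg j = d (src j).1
      · exact ⟨h1, h2.1, h2.2⟩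
      · exact absurd (trmul0 i j h2) h
    · rw [hmulzero i j h1, map_zero] at h
      exact absurd rfl h
  -- symmetry on basis vectors
  have trsym : ∀ i j : ι, tr (b i * b j) = tr (b j * b i) := by
    intro i j
    by_cases h1 : src j = tgt i ∧ tgt j = src i ∧ deg j = d (src i).1 - deg i
    · obtain ⟨hs, ht, hdg⟩ := h1
      obtain ⟨i', ⟨hs', ht', hdg'⟩, ⟨cc, hccne, hci1, hci2⟩, huniq⟩ := hadm3 i
      by_cases hji' : j = i'
      · subst hji'
        rw [hci1, hci2, trsmulθ, trsmulθ]
      · obtain ⟨hz1, hz2⟩ := huniq j hji' ⟨hs, ht, hdg⟩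
        rw [hz1, hz2]
    · have e1 : tr (b i * b j) = 0 := by
        by_contra hh
        obtain ⟨a1, a2, a3⟩ := trne i j hh
        refine h1 ⟨a2, a1, ?_⟩
        rw [a2, hadm1 i] at a3
        omega
      have e2 : tr (b j * b i) = 0 := by
        by_contra hh
        obtain ⟨a1, a2, a3⟩ := trne j i hh
        refine h1 ⟨a1.symm, a2.symm, ?_⟩
        omega
      rw [e1, e2]
  -- End-smul lemmas
  have smulmul : ∀ (c : K) (f g : Module.End A (DirectSum {l : Lam // Module.Injective A (P l)}
      (fun s => P s.1))), (c • f) * g = c • (f * g) := by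
    intro c f g
    rfl
  have mulsmul : ∀ (c : K) (f g : Module.End A (DirectSum {l : Lam // Module.Injective A (P l)}
      (fun s => P s.1))), f * (c • g) = c • (f * g) := by
    intro c f g
    refine LinearMap.ext fun v => ?_
    simp only [Module.End.mul_apply, LinearMap.smul_apply]
    exact f.map_smul_of_tower c (g v)
  have expand : ∀ u v : Module.End A (DirectSum {l : Lam // Module.Injective A (P l)}
      (fun s => P s.1)), tr (u * v) =
      ∑ i : ι, ∑ jj : ι, (b.repr u i * b.repr v jj) * tr (b i * b jj) := by
    intro u v
    conv_lhs => rw [← b.sum_repr u, ← b.sum_repr v]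
    rw [Finset.sum_mul, map_sum]
    refine Finset.sum_congr rfl fun i _ => ?_
    rw [smulmul, map_smul, smul_eq_mul, Finset.mul_sum, map_sum, Finset.mul_sum]
    refine Finset.sum_congr rfl fun jj _ => ?_
    rw [mulsmul, map_smul, smul_eq_mul]
    ring
  constructor
  · -- symmetry
    intro x y
    rw [expand x y, expand y x, Finset.sum_comm]
    refine Finset.sum_congr rfl fun i _ => Finset.sum_congr rfl fun jj _ => ?_
    rw [trsym jj i, mul_comm (b.repr x jj) (b.repr y i)]
  · -- nondegeneracy
    intro x hx
    have hc : ∃ i₀ : ι, b.repr x i₀ ≠ 0 := by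
      by_contra h
      push_neg at h
      refine hx ?_
      rw [← b.sum_repr x]
      exact Finset.sum_eq_zero fun i _ => by rw [h i, zero_smul]
    obtain ⟨i₀, hc0⟩ := hc
    obtain ⟨i', ⟨hs, ht, hdg⟩, ⟨cc, hccne, hci1, hci2⟩, huniq⟩ := hadm3 i₀
    refine ⟨b i', ?_⟩
    have expand1 : tr (x * b i') = ∑ i : ι, b.repr x i * tr (b i * b i') := by
      conv_lhs => rw [← b.sum_repr x]
      rw [Finset.sum_mul, map_sum]
      refine Finset.sum_congr rfl fun i _ => ?_
      rw [smulmul, map_smul, smul_eq_mul]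
    rw [expand1]
    have hmain : ∀ i : ι, i ≠ i₀ → b.repr x i * tr (b i * b i') = 0 := by
      intro i hne
      rcases eq_or_ne (tr (b i * b i')) 0 with hz | hz
      · rw [hz, mul_zero]
      · exfalso
        obtain ⟨a1, a2, a3⟩ := trne i i' hz
        obtain ⟨k2, ⟨hs2, ht2, hdg2⟩, ⟨cc2, hcc2, hk1, hk2eq⟩, huniq2⟩ := hadm3 i'
        have hk2i0 : k2 = i₀ := by
          by_contra hne2
          have trip : src i₀ = tgt i' ∧ tgt i₀ = src i' ∧
              deg i₀ = d (src i').1 - deg i' := by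
            refine ⟨ht.symm, hs.symm, ?_⟩
            have h4 : d (src i').1 = d (src i₀).1 := by rw [hs]; exact hadm1 i₀
            omega
          obtain ⟨hz1, hz2⟩ := huniq2 i₀ (fun hh => hne2 hh.symm) trip
          rw [hci2] at hz1
          exact hembne (tgt i₀) cc hccne hz1
        have trip_i : src i = tgt i' ∧ tgt i = src i' ∧
            deg i = d (src i').1 - deg i' := ⟨a1.symm, a2.symm, by omega⟩
        obtain ⟨hz1, hz2⟩ := huniq2 i (by rw [hk2i0]; exact hne) trip_i
        rw [hz1, map_zero] at hz
        exact hz rfl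
    rw [Finset.sum_eq_single i₀ (fun i _ hne => hmain i hne)
      (fun h => absurd (Finset.mem_univ i₀) h)]
    rw [hci2, trsmulθ]
    exact mul_ne_zero hc0 hccne
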